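/- arXiv:2508.14868 — 3 statements merged into one kernel-verified Lean document; each statement's English description precedes it below -/
import Mathlib

section
/- Fix m₀ ≠ 0 and r > 0. Given (t,x,v) ∈ ℝ^(1+2n) and (m₁, m₂) ∈ ℝ^(2n), define the piecewise curve endpoint Φ_∇v(r/3, Φ_transport(r/3, Φ_∇v(r/3, (t,x,v), ω₁), ω₂), ω₃) where Φ_transport(s,(t,x,v),m) = (t+s·m, x+s·m·v, v) and Φ_∇v(s,(t,x,v),m) = (t, x, v+√s·m). Then with ω₁ = √3·(m₁/m₀ − r^(−1/2)·v), ω₂ = 3·m₀, ω₃ = √3·(m₂ − m₁/m₀ + r^(−1/2)·v), the endpoint equals (t + r·m₀, x + r^(3/2)·m₁, v + r^(1/2)·m₂). -/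
open Real

/-- The flow along the transport vector field `∂_t + v·∇ₓ`. -/
def PhiTransport (n : ℕ) (s : ℝ) (p : ℝ × (Fin n → ℝ) × (Fin n → ℝ)) (m : ℝ) :
    ℝ × (Fin n → ℝ) × (Fin n → ℝ) :=
  (p.1 + s * m, p.2.1 + (s * m) • p.2.2, p.2.2)

/-- The flow along the velocity vector field `∇ᵥ` (with square-root time scaling). -/
noncomputable def PhiNablaV (n : ℕ) (s : ℝ) (p : ℝ × (Fin n → ℝ) × (Fin n → ℝ)) (m : Fin n → ℝ) :
    ℝ × (Fin n → ℝ) × (Fin n → ℝ) :=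
  (p.1, p.2.1, p.2.2 + Real.sqrt s • m)

/-- The piecewise curve `Φ_∇v(r/3, Φ_transport(r/3, Φ_∇v(r/3, (t,x,v), ω₁), ω₂), ω₃)` with
`ω₁ = √3(m₁/m₀ − r^(−1/2) v)`, `ω₂ = 3m₀`, `ω₃ = √3(m₂ − m₁/m₀ + r^(−1/2) v)` has endpoint
`(t + r·m₀, x + r^(3/2)·m₁, v + r^(1/2)·m₂)`. -/
theorem piecewise_kinetic_curve_endpoint (n : ℕ) (hn : 1 ≤ n)
    (m₀ : ℝ) (hm₀ : m₀ ≠ 0) (r : ℝ) (hr : 0 < r)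
    (t : ℝ) (x v m₁ m₂ : Fin n → ℝ) :
    PhiNablaV n (r / 3)
      (PhiTransport n (r / 3)
        (PhiNablaV n (r / 3) (t, x, v)
          (Real.sqrt 3 • (m₀⁻¹ • m₁ - r ^ (-(1 : ℝ) / 2) • v)))
        (3 * m₀))
      (Real.sqrt 3 • (m₂ - m₀⁻¹ • m₁ + r ^ (-(1 : ℝ) / 2) • v)) =
    (t + r * m₀, x + r ^ ((3 : ℝ) / 2) • m₁, v + r ^ ((1 : ℝ) / 2) • m₂) := by
  have hA : Real.sqrt (r / 3) * Real.sqrt 3 = r ^ ((1 : ℝ) / 2) := by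
    rw [← Real.sqrt_mul (by positivity), div_mul_cancel₀ _ (by norm_num : (3 : ℝ) ≠ 0),
      Real.sqrt_eq_rpow]
  have hneg : r ^ (-(1 : ℝ) / 2) = (r ^ ((1 : ℝ) / 2))⁻¹ := by
    rw [neg_div, Real.rpow_neg hr.le]
  have h32 : r ^ ((3 : ℝ) / 2) = r * r ^ ((1 : ℝ) / 2) := by
    rw [show (3 : ℝ) / 2 = 1 + 1 / 2 by norm_num, Real.rpow_add hr, Real.rpow_one]
  have hApos : (0 : ℝ) < r ^ ((1 : ℝ) / 2) := Real.rpow_pos_of_pos hr _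
  simp only [PhiNablaV, PhiTransport, Prod.mk.injEq]
  refine ⟨by ring, ?_, ?_⟩ <;> funext i <;>
    simp only [Pi.add_apply, Pi.smul_apply, Pi.sub_apply, smul_eq_mul, hneg, h32] <;>
    (field_simp; rw [hA]; ring)
end

section
/- The function f(t, v₁, v₂) = exp((1/(4λ) − Λ)·t − v₁/(2λ))·cos(v₂) is a positive classical solution of ∂_t f = λ·∂²_{v₁} f + Λ·∂²_{v₂} f on (−2,2) × (−π/2, π/2)², and log(f(0,(0,0))/f(1,(1,0))) = Λ + 1/(4λ) > (Λ + 1/λ)/4. -/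
open Real

private lemma expdiv_hasDerivAt (c e K : ℝ) (w : ℝ) :
    HasDerivAt (fun w : ℝ => Real.exp (c - w / e) * K)
      (-(1 / e) * Real.exp (c - w / e) * K) w := by
  have h1 : HasDerivAt (fun w : ℝ => c - w / e) (-(1 / e)) w := by
    simpa [one_div] using ((hasDerivAt_id w).div_const e).const_sub c
  have := (h1.exp).mul_const K
  exact this.congr_deriv (by ring)

private lemma coscst_hasDerivAt (E : ℝ) (w : ℝ) :
    HasDerivAt (fun w : ℝ => E * Real.cos w) (-E * Real.sin w) w := by
  simpa [mul_comm, neg_mul, mul_neg] using (Real.hasDerivAt_cos w).const_mul E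

private lemma sincst_hasDerivAt (E : ℝ) (w : ℝ) :
    HasDerivAt (fun w : ℝ => E * Real.sin w) (E * Real.cos w) w := by
  simpa [mul_comm] using (Real.hasDerivAt_sin w).const_mul E

/-- The function `f(t,v₁,v₂) = exp((1/(4λ) − Λ)t − v₁/(2λ))·cos v₂` is a positive classical
solution of `∂_t f = λ ∂²_{v₁} f + Λ ∂²_{v₂} f` on `(−2,2) × (−π/2, π/2)²`, and
`log(f(0,(0,0))/f(1,(1,0))) = Λ + 1/(4λ) > (Λ + 1/λ)/4`. -/
theorem moser_optimality_example (lam Lam : ℝ) (hlam : 0 < lam) (hlamLam : lam ≤ Lam)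
    (f : ℝ → ℝ → ℝ → ℝ)
    (hf : ∀ t v₁ v₂ : ℝ,
      f t v₁ v₂ = Real.exp ((1 / (4 * lam) - Lam) * t - v₁ / (2 * lam)) * Real.cos v₂) :
    (∀ t v₁ v₂ : ℝ, t ∈ Set.Ioo (-2 : ℝ) 2 → v₁ ∈ Set.Ioo (-(π / 2)) (π / 2) →
        v₂ ∈ Set.Ioo (-(π / 2)) (π / 2) →
      0 < f t v₁ v₂ ∧
      deriv (fun s => f s v₁ v₂) t =
        lam * deriv (deriv (fun w => f t w v₂)) v₁ +
          Lam * deriv (deriv (fun w => f t v₁ w)) v₂) ∧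
    Real.log (f 0 0 0 / f 1 1 0) = Lam + 1 / (4 * lam) ∧
    (Lam + 1 / lam) / 4 < Lam + 1 / (4 * lam) := by
  have hl : (lam : ℝ) ≠ 0 := ne_of_gt hlam
  set a : ℝ := 1 / (4 * lam) - Lam with ha
  refine ⟨?_, ?_, ?_⟩
  · intro t v₁ v₂ ht hv₁ hv₂
    have hcos : 0 < Real.cos v₂ := Real.cos_pos_of_mem_Ioo hv₂
    constructor
    · rw [hf]; positivity
    · -- t derivative
      have hdt : deriv (fun s => f s v₁ v₂) t =
          a * Real.exp (a * t - v₁ / (2 * lam)) * Real.cos v₂ := by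
        have h1 : HasDerivAt (fun s : ℝ => Real.exp (a * s - v₁ / (2 * lam)) * Real.cos v₂)
            (a * Real.exp (a * t - v₁ / (2 * lam)) * Real.cos v₂) t := by
          have h2 : HasDerivAt (fun s : ℝ => a * s - v₁ / (2 * lam)) a t := by
            simpa using ((hasDerivAt_id t).const_mul a).sub_const (v₁ / (2 * lam))
          have := (h2.exp).mul_const (Real.cos v₂)
          exact this.congr_deriv (by ring)
        simp only [hf]; exact h1.deriv
      -- v₁ second derivative
      have hd1 : deriv (fun w => f t w v₂) =
          fun w => -(1 / (2 * lam)) * Real.exp (a * t - w / (2 * lam)) * Real.cos v₂ := by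
        funext w
        simp only [hf]
        exact (expdiv_hasDerivAt (a * t) (2 * lam) (Real.cos v₂) w).deriv
      have hdv1 : deriv (deriv (fun w => f t w v₂)) v₁ =
          (1 / (2 * lam)) * ((1 / (2 * lam)) * Real.exp (a * t - v₁ / (2 * lam)) * Real.cos v₂) := by
        rw [hd1]
        have h := ((expdiv_hasDerivAt (a * t) (2 * lam) (Real.cos v₂) v₁).const_mul
          (-(1 / (2 * lam)))).deriv
        have heq : (fun w => -(1 / (2 * lam)) * Real.exp (a * t - w / (2 * lam)) * Real.cos v₂)
            = fun w => -(1 / (2 * lam)) * (Real.exp (a * t - w / (2 * lam)) * Real.cos v₂) := by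
          funext w; ring
        rw [heq, h]; ring
      -- v₂ second derivative
      have hd2 : deriv (fun w => f t v₁ w) =
          fun w => -(Real.exp (a * t - v₁ / (2 * lam))) * Real.sin w := by
        funext w
        simp only [hf]
        exact (coscst_hasDerivAt (Real.exp (a * t - v₁ / (2 * lam))) w).deriv
      have hdv2 : deriv (deriv (fun w => f t v₁ w)) v₂ =
          -(Real.exp (a * t - v₁ / (2 * lam))) * Real.cos v₂ := by
        rw [hd2]
        exact (sincst_hasDerivAt (-(Real.exp (a * t - v₁ / (2 * lam)))) v₂).deriv
      rw [hdt, hdv1, hdv2, ha]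
      field_simp
      ring
  · have h0 : f 0 0 0 = 1 := by simp [hf]
    have h1 : f 1 1 0 = Real.exp (a * 1 - 1 / (2 * lam)) := by simp [hf]
    rw [h0, h1, one_div, Real.log_inv, Real.log_exp, ha]
    field_simp
    ring
  · have hLam : 0 < Lam := lt_of_lt_of_le hlam hlamLam
    have h4 : (4:ℝ) * (1 / (4 * lam)) = 1 / lam := by field_simp
    have hil : 0 < 1 / lam := by positivity
    linarith
end

section
/- For the Kolmogorov fundamental solution Γ(t,x,v) = (√3)ⁿ/((2π)ⁿ·t^(2n))·exp(−|v|²/t + 3⟨v,x⟩/t² − 3|x|²/t³) (with t > 0, x,v ∈ ℝⁿ), and for any p > 0, δ ∈ (0,1), and 0 < t₀ < 1, the integral ∫₀^{t₀} ∫_{B_δ} ∫_{B_δ} Γ(t,x,v)^p dv dx dt is finite if and only if p < 1 + 1/(2n). In particular, for n = 1 one may verify finiteness fails at p = 3/2. -/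
open MeasureTheory Real ENNReal

noncomputable def kfsG (n : ℕ) (p : ℝ) : ℝ × EuclideanSpace ℝ (Fin n) × EuclideanSpace ℝ (Fin n) → ℝ :=
  fun z => ((Real.sqrt 3) ^ n / (2 * π) ^ n) ^ p * z.1 ^ (-(2 * (n : ℝ) * p)) *
    (Real.exp (-(3 * p / (4 * z.1 ^ 3)) * ‖z.2.1‖ ^ 2) *
      Real.exp (-(p / z.1) * ‖z.2.2 - (3 / (2 * z.1)) • z.2.1‖ ^ 2))

lemma kfsG_meas (n : ℕ) (p : ℝ) : Measurable (kfsG n p) := by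
  unfold kfsG
  have h1 : Measurable (fun z : ℝ × EuclideanSpace ℝ (Fin n) × EuclideanSpace ℝ (Fin n) =>
      z.2.2 - (3 / (2 * z.1)) • z.2.1) := by
    apply Measurable.sub (measurable_snd.snd)
    exact ((measurable_const.div (measurable_const.mul measurable_fst)).smul measurable_snd.fst)
  apply Measurable.mul
  · exact (measurable_const.mul (measurable_fst.pow_const _))
  · apply Measurable.mul
    · apply Real.measurable_exp.comp
      apply Measurable.mul
      · exact (measurable_const.div (measurable_const.mul (measurable_fst.pow measurable_const))).neg
      · exact (measurable_snd.fst.norm.pow measurable_const)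
    · apply Real.measurable_exp.comp
      apply Measurable.mul
      · exact (measurable_const.div measurable_fst).neg
      · exact (h1.norm.pow measurable_const)

lemma kfs_gauss {n : ℕ} (b : ℝ) (hb : 0 < b) (a : EuclideanSpace ℝ (Fin n)) :
    ∫⁻ v : EuclideanSpace ℝ (Fin n), ENNReal.ofReal (Real.exp (-b * ‖v - a‖^2)) =
      ENNReal.ofReal ((π / b) ^ ((n : ℝ) / 2)) := by
  have hint : Integrable (fun v : EuclideanSpace ℝ (Fin n) => Real.exp (-b * ‖v‖^2)) := by
    have h := (GaussianFourier.integrable_cexp_neg_mul_sq_norm_add (V := EuclideanSpace ℝ (Fin n))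
      (b := (b : ℂ)) (by simpa using hb) 0 0).norm
    refine h.congr (Filter.Eventually.of_forall fun v => ?_)
    simp only
    rw [show (-(b:ℂ) * (‖v‖:ℂ)^2 + 0 * ((inner ℝ (0 : EuclideanSpace ℝ (Fin n)) v : ℝ):ℂ)) = ((-b * ‖v‖^2 : ℝ) : ℂ) by push_cast; ring]
    rw [Complex.norm_exp, Complex.ofReal_re]
  have h1 : ∫⁻ v : EuclideanSpace ℝ (Fin n), ENNReal.ofReal (Real.exp (-b * ‖v - a‖^2)) =
      ∫⁻ v : EuclideanSpace ℝ (Fin n), ENNReal.ofReal (Real.exp (-b * ‖v‖^2)) :=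
    lintegral_sub_right_eq_self (fun v => ENNReal.ofReal (Real.exp (-b * ‖v‖^2))) a
  rw [h1, ← ofReal_integral_eq_lintegral_ofReal hint
    (Filter.Eventually.of_forall fun v => (Real.exp_pos _).le)]
  rw [GaussianFourier.integral_rexp_neg_mul_sq_norm hb]
  congr 1
  simp [finrank_euclideanSpace]

lemma kfs_sq_complete {n : ℕ} (t : ℝ) (ht : 0 < t) (x v : EuclideanSpace ℝ (Fin n)) :
    -(‖v‖ ^ 2) / t + 3 * (inner ℝ v x : ℝ) / t ^ 2 - 3 * ‖x‖ ^ 2 / t ^ 3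
    = -(3 / (4 * t ^ 3)) * ‖x‖ ^ 2 + -(1 / t) * ‖v - (3 / (2 * t)) • x‖ ^ 2 := by
  have h : ‖v - (3 / (2 * t)) • x‖ ^ 2
      = ‖v‖ ^ 2 - 2 * ((3 / (2 * t)) * (inner ℝ v x : ℝ)) + (3 / (2 * t)) ^ 2 * ‖x‖ ^ 2 := by
    rw [norm_sub_sq_real, real_inner_smul_right, norm_smul, mul_pow, norm_eq_abs, sq_abs]
  rw [h]
  field_simp
  ring

lemma kfs_point {n : ℕ} {p : ℝ} (t : ℝ) (ht : 0 < t) (x v : EuclideanSpace ℝ (Fin n)) :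
    ((Real.sqrt 3) ^ n / ((2 * π) ^ n * t ^ (2 * n)) *
        Real.exp (-(‖v‖ ^ 2) / t + 3 * (inner ℝ v x : ℝ) / t ^ 2 - 3 * ‖x‖ ^ 2 / t ^ 3)) ^ p
    = kfsG n p (t, x, v) := by
  have hA : (0:ℝ) < (Real.sqrt 3) ^ n / (2 * π) ^ n := by positivity
  have ht2n : (0:ℝ) < t ^ (2 * n) := by positivity
  unfold kfsG
  simp only
  rw [kfs_sq_complete t ht x v]
  rw [show (Real.sqrt 3) ^ n / ((2 * π) ^ n * t ^ (2 * n))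
      = ((Real.sqrt 3) ^ n / (2 * π) ^ n) * (t ^ (2 * n))⁻¹ by field_simp]
  rw [Real.mul_rpow (by positivity) (Real.exp_pos _).le,
    Real.mul_rpow hA.le (by positivity), ← Real.rpow_natCast t (2 * n),
    ← Real.rpow_neg_one (t ^ ((2 * n : ℕ) : ℝ)),
    ← Real.rpow_mul ht.le, ← Real.rpow_mul ht.le, ← Real.exp_mul]
  rw [show ((2 * n : ℕ) : ℝ) * -1 * p = -(2 * (n : ℝ) * p) by push_cast; ring,
    ← Real.exp_add]
  congr 1
  rw [Real.exp_eq_exp]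
  field_simp

lemma kfs_tonelli {n : ℕ} (f : ℝ × EuclideanSpace ℝ (Fin n) × EuclideanSpace ℝ (Fin n) → ℝ≥0∞)
    (hf : Measurable f) (I : Set ℝ) (B : Set (EuclideanSpace ℝ (Fin n))) :
    ∫⁻ z in I ×ˢ B ×ˢ B, f z = ∫⁻ t in I, ∫⁻ x in B, ∫⁻ v in B, f (t, x, v) := by
  have h1 : (volume : Measure (ℝ × EuclideanSpace ℝ (Fin n) × EuclideanSpace ℝ (Fin n))).restrict
        (I ×ˢ B ×ˢ B)
      = (volume.restrict I).prod ((volume.restrict B).prod (volume.restrict B)) := by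
    rw [Measure.prod_restrict, Measure.prod_restrict, ← Measure.volume_eq_prod, ← Measure.volume_eq_prod]
  rw [h1, lintegral_prod _ hf.aemeasurable]
  congr 1
  ext t
  exact lintegral_prod (fun y => f (t, y)) (hf.comp measurable_prodMk_left).aemeasurable
lemma kfs_upper {n : ℕ} {p t₀ δ : ℝ} (hp : 0 < p) (ht0 : 0 < t₀)
    (hs : -1 < 2 * (n:ℝ) - 2 * n * p) :
    ∫⁻ t in Set.Ioo (0:ℝ) t₀, ∫⁻ x in Metric.ball (0 : EuclideanSpace ℝ (Fin n)) δ,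
      ∫⁻ v in Metric.ball (0 : EuclideanSpace ℝ (Fin n)) δ,
        ENNReal.ofReal (kfsG n p (t, x, v)) < ⊤ := by
  set A : ℝ := (Real.sqrt 3) ^ n / (2 * π) ^ n with hA_def
  have hA : (0:ℝ) < A := by rw [hA_def]; positivity
  set K : ℝ := A ^ p * ((4 * π / (3 * p)) ^ ((n:ℝ)/2) * (π / p) ^ ((n:ℝ)/2)) with hK_def
  have hK : (0:ℝ) < K := by rw [hK_def]; positivity
  set s : ℝ := 2 * (n:ℝ) - 2 * n * p with hs_def
  have bound : ∀ t ∈ Set.Ioo (0:ℝ) t₀,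
      (∫⁻ x in Metric.ball (0 : EuclideanSpace ℝ (Fin n)) δ,
        ∫⁻ v in Metric.ball (0 : EuclideanSpace ℝ (Fin n)) δ,
          ENNReal.ofReal (kfsG n p (t, x, v))) ≤ ENNReal.ofReal (K * t ^ s) := by
    intro t ht
    have ht1 : (0:ℝ) < t := ht.1
    have hb2 : (0:ℝ) < 3 * p / (4 * t ^ 3) := by positivity
    have hb1 : (0:ℝ) < p / t := by positivity
    have hc1 : ∀ x : EuclideanSpace ℝ (Fin n),
        (0:ℝ) ≤ A ^ p * t ^ (-(2 * (n:ℝ) * p)) * Real.exp (-(3 * p / (4 * t ^ 3)) * ‖x‖ ^ 2) := by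
      intro x
      have := Real.rpow_nonneg ht1.le (-(2 * (n:ℝ) * p))
      positivity
    -- inner v integral
    have hv : ∀ x : EuclideanSpace ℝ (Fin n),
        (∫⁻ v in Metric.ball (0 : EuclideanSpace ℝ (Fin n)) δ,
          ENNReal.ofReal (kfsG n p (t, x, v)))
        ≤ ENNReal.ofReal (A ^ p * t ^ (-(2 * (n:ℝ) * p)) *
            Real.exp (-(3 * p / (4 * t ^ 3)) * ‖x‖ ^ 2)) *
          ENNReal.ofReal ((π / (p / t)) ^ ((n:ℝ)/2)) := by
      intro x
      calc (∫⁻ v in Metric.ball (0 : EuclideanSpace ℝ (Fin n)) δ,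
            ENNReal.ofReal (kfsG n p (t, x, v)))
          ≤ ∫⁻ v, ENNReal.ofReal (kfsG n p (t, x, v)) := setLIntegral_le_lintegral _ _
        _ = ∫⁻ v, ENNReal.ofReal (A ^ p * t ^ (-(2 * (n:ℝ) * p)) *
              Real.exp (-(3 * p / (4 * t ^ 3)) * ‖x‖ ^ 2)) *
            ENNReal.ofReal (Real.exp (-(p / t) * ‖v - (3 / (2 * t)) • x‖ ^ 2)) := by
            refine lintegral_congr fun v => ?_
            rw [← ENNReal.ofReal_mul (hc1 x)]
            congr 1
            unfold kfsG
            ring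
        _ = ENNReal.ofReal (A ^ p * t ^ (-(2 * (n:ℝ) * p)) *
              Real.exp (-(3 * p / (4 * t ^ 3)) * ‖x‖ ^ 2)) *
            ∫⁻ v, ENNReal.ofReal (Real.exp (-(p / t) * ‖v - (3 / (2 * t)) • x‖ ^ 2)) := by
            rw [lintegral_const_mul' _ _ ENNReal.ofReal_ne_top]
        _ = _ := by rw [kfs_gauss (p / t) hb1 ((3 / (2 * t)) • x)]
    have hx : (∫⁻ x in Metric.ball (0 : EuclideanSpace ℝ (Fin n)) δ,
          ∫⁻ v in Metric.ball (0 : EuclideanSpace ℝ (Fin n)) δ,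
            ENNReal.ofReal (kfsG n p (t, x, v)))
        ≤ ENNReal.ofReal (A ^ p * t ^ (-(2 * (n:ℝ) * p))) *
            ENNReal.ofReal ((π / (3 * p / (4 * t ^ 3))) ^ ((n:ℝ)/2)) *
            ENNReal.ofReal ((π / (p / t)) ^ ((n:ℝ)/2)) := by
      calc (∫⁻ x in Metric.ball (0 : EuclideanSpace ℝ (Fin n)) δ,
            ∫⁻ v in Metric.ball (0 : EuclideanSpace ℝ (Fin n)) δ,
              ENNReal.ofReal (kfsG n p (t, x, v)))
          ≤ ∫⁻ x in Metric.ball (0 : EuclideanSpace ℝ (Fin n)) δ,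
              ENNReal.ofReal (A ^ p * t ^ (-(2 * (n:ℝ) * p)) *
                Real.exp (-(3 * p / (4 * t ^ 3)) * ‖x‖ ^ 2)) *
              ENNReal.ofReal ((π / (p / t)) ^ ((n:ℝ)/2)) := by
            refine setLIntegral_mono' measurableSet_ball fun x _ => hv x
        _ ≤ ∫⁻ x : EuclideanSpace ℝ (Fin n), ENNReal.ofReal (A ^ p * t ^ (-(2 * (n:ℝ) * p)) *
              Real.exp (-(3 * p / (4 * t ^ 3)) * ‖x‖ ^ 2)) *
              ENNReal.ofReal ((π / (p / t)) ^ ((n:ℝ)/2)) := setLIntegral_le_lintegral _ _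
        _ = (∫⁻ x : EuclideanSpace ℝ (Fin n), ENNReal.ofReal (A ^ p * t ^ (-(2 * (n:ℝ) * p))) *
              ENNReal.ofReal (Real.exp (-(3 * p / (4 * t ^ 3)) * ‖x - 0‖ ^ 2))) *
              ENNReal.ofReal ((π / (p / t)) ^ ((n:ℝ)/2)) := by
            rw [lintegral_mul_const' _ _ ENNReal.ofReal_ne_top]
            congr 1
            refine lintegral_congr fun x => ?_
            rw [sub_zero, ← ENNReal.ofReal_mul (by positivity)]
        _ = _ := by
            rw [lintegral_const_mul' _ _ ENNReal.ofReal_ne_top,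
              kfs_gauss (3 * p / (4 * t ^ 3)) hb2 0]
    refine hx.trans (le_of_eq ?_)
    rw [← ENNReal.ofReal_mul (by positivity), ← ENNReal.ofReal_mul (by positivity)]
    congr 1
    have e0 : π / (3 * p / (4 * t ^ 3)) = (4 * π / (3 * p)) * t ^ (3:ℕ) := by
      field_simp
    have e1 : π / (p / t) = (π / p) * t := by field_simp
    rw [e0, e1, Real.mul_rpow (by positivity) (by positivity),
      Real.mul_rpow (by positivity) ht1.le, ← Real.rpow_natCast t 3,
      ← Real.rpow_mul ht1.le]
    have emerge : t ^ (-(2 * (n:ℝ) * p)) * t ^ (((3:ℕ):ℝ) * ((n:ℝ)/2)) * t ^ ((n:ℝ)/2)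
        = t ^ s := by
      rw [← Real.rpow_add ht1, ← Real.rpow_add ht1, hs_def]
      congr 1
      push_cast
      ring
    rw [hK_def, ← emerge]
    ring
  calc (∫⁻ t in Set.Ioo (0:ℝ) t₀, ∫⁻ x in Metric.ball (0 : EuclideanSpace ℝ (Fin n)) δ,
        ∫⁻ v in Metric.ball (0 : EuclideanSpace ℝ (Fin n)) δ,
          ENNReal.ofReal (kfsG n p (t, x, v)))
      ≤ ∫⁻ t in Set.Ioo (0:ℝ) t₀, ENNReal.ofReal (K * t ^ s) :=
        setLIntegral_mono' measurableSet_Ioo bound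
    _ = ENNReal.ofReal K * ∫⁻ t in Set.Ioo (0:ℝ) t₀, ENNReal.ofReal (t ^ s) := by
        rw [← lintegral_const_mul' _ _ ENNReal.ofReal_ne_top]
        exact lintegral_congr fun t => by rw [← ENNReal.ofReal_mul hK.le]
    _ < ⊤ := by
        refine ENNReal.mul_lt_top ENNReal.ofReal_lt_top ?_
        have hInt : IntegrableOn (fun t : ℝ => t ^ s) (Set.Ioo (0:ℝ) t₀) :=
          (intervalIntegral.integrableOn_Ioo_rpow_iff ht0).mpr hs
        have h2 := hInt.2
        rw [hasFiniteIntegral_iff_ofReal ?_] at h2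
        · exact h2
        · filter_upwards [ae_restrict_mem measurableSet_Ioo] with x hx
          exact Real.rpow_nonneg hx.1.le _
lemma kfs_rpow_lint_top {s T : ℝ} (hT : 0 < T) (hs : s ≤ -1) :
    ∫⁻ t in Set.Ioo (0:ℝ) T, ENNReal.ofReal (t ^ s) = ⊤ := by
  by_contra h
  have hmeas : Measurable (fun t : ℝ => t ^ s) := measurable_id.pow_const _
  have hInt : IntegrableOn (fun t : ℝ => t ^ s) (Set.Ioo (0:ℝ) T) := by
    refine ⟨hmeas.aestronglyMeasurable, ?_⟩
    rw [hasFiniteIntegral_iff_ofReal ?_]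
    · exact lt_top_iff_ne_top.mpr h
    · filter_upwards [ae_restrict_mem measurableSet_Ioo] with x hx
      exact Real.rpow_nonneg hx.1.le _
  have := (intervalIntegral.integrableOn_Ioo_rpow_iff hT).mp hInt
  linarith

lemma kfs_lower {n : ℕ} {p t₀ δ : ℝ} (hp : 0 < p)
    (hδ : δ ∈ Set.Ioo (0:ℝ) 1) (ht₀ : t₀ ∈ Set.Ioo (0:ℝ) 1)
    (hs : 2 * (n:ℝ) - 2 * n * p ≤ -1) :
    ∫⁻ t in Set.Ioo (0:ℝ) t₀, ∫⁻ x in Metric.ball (0 : EuclideanSpace ℝ (Fin n)) δ,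
      ∫⁻ v in Metric.ball (0 : EuclideanSpace ℝ (Fin n)) δ,
        ENNReal.ofReal (kfsG n p (t, x, v)) = ⊤ := by
  obtain ⟨hδ0, hδ1⟩ := hδ
  obtain ⟨ht0, ht1⟩ := ht₀
  set A : ℝ := (Real.sqrt 3) ^ n / (2 * π) ^ n with hA_def
  have hA : (0:ℝ) < A := by rw [hA_def]; positivity
  set c₀ : ℝ := A ^ p * (Real.exp (-(3 * p / 4)) * Real.exp (-(25 * p / 4))) with hc_def
  have hc₀ : (0:ℝ) < c₀ := by rw [hc_def]; positivity
  set T : ℝ := min t₀ (δ ^ 2) with hT_def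
  have hT : (0:ℝ) < T := lt_min ht0 (by positivity)
  set ν : ℝ≥0∞ := volume (Metric.ball (0 : EuclideanSpace ℝ (Fin n)) 1) with hν_def
  have hν0 : ν ≠ 0 := by
    rw [hν_def]
    exact (Metric.measure_ball_pos volume 0 one_pos).ne'
  have hνtop : ν ≠ ⊤ := by
    rw [hν_def]
    exact measure_ball_lt_top.ne
  have step : ∀ t ∈ Set.Ioo (0:ℝ) T,
      ENNReal.ofReal (c₀ * t ^ (2 * (n:ℝ) - 2 * n * p)) * (ν * ν)
      ≤ ∫⁻ x in Metric.ball (0 : EuclideanSpace ℝ (Fin n)) δ,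
          ∫⁻ v in Metric.ball (0 : EuclideanSpace ℝ (Fin n)) δ,
            ENNReal.ofReal (kfsG n p (t, x, v)) := by
    intro t ht
    have ht1' : (0:ℝ) < t := ht.1
    have htle1 : t ≤ 1 := le_of_lt (lt_of_lt_of_le ht.2 ((min_le_left _ _).trans ht1.le))
    have hsq : Real.sqrt t < δ := by
      have : Real.sqrt t < Real.sqrt (δ ^ 2) :=
        Real.sqrt_lt_sqrt ht1'.le (lt_of_lt_of_le ht.2 (min_le_right _ _))
      rwa [Real.sqrt_sq hδ0.le] at this
    have hsqpos : (0:ℝ) < Real.sqrt t := Real.sqrt_pos.mpr ht1'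
    have hr1pos : (0:ℝ) < t * Real.sqrt t := by positivity
    have hr1 : t * Real.sqrt t < δ :=
      lt_of_le_of_lt (by nlinarith [hsqpos.le]) hsq
    have hsub1 : Metric.ball (0 : EuclideanSpace ℝ (Fin n)) (t * Real.sqrt t)
        ⊆ Metric.ball 0 δ := Metric.ball_subset_ball hr1.le
    have hsub2 : Metric.ball (0 : EuclideanSpace ℝ (Fin n)) (Real.sqrt t)
        ⊆ Metric.ball 0 δ := Metric.ball_subset_ball hsq.le
    have hrp : (0:ℝ) < t ^ (-(2 * (n:ℝ) * p)) := Real.rpow_pos_of_pos ht1' _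
    -- pointwise lower bound
    have hpoint : ∀ x ∈ Metric.ball (0 : EuclideanSpace ℝ (Fin n)) (t * Real.sqrt t),
        ∀ v ∈ Metric.ball (0 : EuclideanSpace ℝ (Fin n)) (Real.sqrt t),
        c₀ * t ^ (-(2 * (n:ℝ) * p)) ≤ kfsG n p (t, x, v) := by
      intro x hx v hv
      rw [Metric.mem_ball, dist_zero_right] at hx hv
      have hx2 : ‖x‖ ^ 2 ≤ t ^ 3 := by
        have h1 : ‖x‖ ^ 2 ≤ (t * Real.sqrt t) ^ 2 := by
          have := norm_nonneg x
          nlinarith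
        calc ‖x‖ ^ 2 ≤ (t * Real.sqrt t) ^ 2 := h1
          _ = t ^ 2 * (Real.sqrt t) ^ 2 := by ring
          _ = t ^ 3 := by rw [Real.sq_sqrt ht1'.le]; ring
      have hvx : ‖v - (3 / (2 * t)) • x‖ ^ 2 ≤ 25 / 4 * t := by
        have hns : ‖(3 / (2 * t)) • x‖ = 3 / (2 * t) * ‖x‖ := by
          rw [norm_smul, Real.norm_eq_abs, abs_of_pos (by positivity)]
        have h1 : ‖v - (3 / (2 * t)) • x‖ ≤ ‖v‖ + 3 / (2 * t) * ‖x‖ := by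
          calc ‖v - (3 / (2 * t)) • x‖ ≤ ‖v‖ + ‖(3 / (2 * t)) • x‖ := norm_sub_le _ _
            _ = ‖v‖ + 3 / (2 * t) * ‖x‖ := by rw [hns]
        have h2 : 3 / (2 * t) * ‖x‖ ≤ 3 / 2 * Real.sqrt t := by
          rw [div_mul_eq_mul_div, div_le_iff₀ (by positivity)]
          calc 3 * ‖x‖ ≤ 3 * (t * Real.sqrt t) := by nlinarith
            _ = 3 / 2 * Real.sqrt t * (2 * t) := by ring
        have h3 : ‖v - (3 / (2 * t)) • x‖ ≤ 5 / 2 * Real.sqrt t := by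
          calc ‖v - (3 / (2 * t)) • x‖ ≤ ‖v‖ + 3 / (2 * t) * ‖x‖ := h1
            _ ≤ Real.sqrt t + 3 / 2 * Real.sqrt t := by linarith [hv.le]
            _ = 5 / 2 * Real.sqrt t := by ring
        calc ‖v - (3 / (2 * t)) • x‖ ^ 2 ≤ (5 / 2 * Real.sqrt t) ^ 2 := by
              have := norm_nonneg (v - (3 / (2 * t)) • x); nlinarith
          _ = 25 / 4 * (Real.sqrt t) ^ 2 := by ring
          _ = 25 / 4 * t := by rw [Real.sq_sqrt ht1'.le]
      have he1 : Real.exp (-(3 * p / 4)) ≤ Real.exp (-(3 * p / (4 * t ^ 3)) * ‖x‖ ^ 2) := by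
        apply Real.exp_le_exp.mpr
        rw [neg_mul, neg_le_neg_iff]
        calc 3 * p / (4 * t ^ 3) * ‖x‖ ^ 2 ≤ 3 * p / (4 * t ^ 3) * t ^ 3 :=
              mul_le_mul_of_nonneg_left hx2 (by positivity)
          _ = 3 * p / 4 := by field_simp
      have he2 : Real.exp (-(25 * p / 4)) ≤
          Real.exp (-(p / t) * ‖v - (3 / (2 * t)) • x‖ ^ 2) := by
        apply Real.exp_le_exp.mpr
        rw [neg_mul, neg_le_neg_iff]
        calc p / t * ‖v - (3 / (2 * t)) • x‖ ^ 2 ≤ p / t * (25 / 4 * t) :=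
              mul_le_mul_of_nonneg_left hvx (by positivity)
          _ = 25 * p / 4 := by field_simp
      have hee : Real.exp (-(3 * p / 4)) * Real.exp (-(25 * p / 4)) ≤
          Real.exp (-(3 * p / (4 * t ^ 3)) * ‖x‖ ^ 2) *
            Real.exp (-(p / t) * ‖v - (3 / (2 * t)) • x‖ ^ 2) :=
        mul_le_mul he1 he2 (Real.exp_pos _).le (Real.exp_pos _).le
      calc c₀ * t ^ (-(2 * (n:ℝ) * p))
          = (A ^ p * t ^ (-(2 * (n:ℝ) * p))) *
            (Real.exp (-(3 * p / 4)) * Real.exp (-(25 * p / 4))) := by rw [hc_def]; ring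
        _ ≤ (A ^ p * t ^ (-(2 * (n:ℝ) * p))) *
            (Real.exp (-(3 * p / (4 * t ^ 3)) * ‖x‖ ^ 2) *
              Real.exp (-(p / t) * ‖v - (3 / (2 * t)) • x‖ ^ 2)) :=
            mul_le_mul_of_nonneg_left hee (by positivity)
        _ = kfsG n p (t, x, v) := by unfold kfsG; rw [hA_def]
    -- volume computation
    have hreal : c₀ * t ^ (2 * (n:ℝ) - 2 * n * p)
        = c₀ * t ^ (-(2 * (n:ℝ) * p)) * ((t * Real.sqrt t) ^ n * (Real.sqrt t) ^ n) := by
      have h1 : (t * Real.sqrt t) ^ n * (Real.sqrt t) ^ n = t ^ (2 * n) := by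
        rw [← mul_pow, mul_assoc, Real.mul_self_sqrt ht1'.le, ← sq, ← pow_mul]
      have h2 : t ^ (-(2 * (n:ℝ) * p)) * t ^ (((2 * n : ℕ)) : ℝ) = t ^ (2 * (n:ℝ) - 2 * n * p) := by
        rw [← Real.rpow_add ht1']
        congr 1
        push_cast
        ring
      rw [h1, ← Real.rpow_natCast t (2 * n), ← h2]
      ring
    have e1 : (∫⁻ _x in Metric.ball (0 : EuclideanSpace ℝ (Fin n)) (t * Real.sqrt t),
          ∫⁻ _v in Metric.ball (0 : EuclideanSpace ℝ (Fin n)) (Real.sqrt t),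
            ENNReal.ofReal (c₀ * t ^ (-(2 * (n:ℝ) * p))))
        = ENNReal.ofReal (c₀ * t ^ (2 * (n:ℝ) - 2 * n * p)) * (ν * ν) := by
      rw [setLIntegral_const, setLIntegral_const,
        Measure.addHaar_ball_of_pos volume 0 hr1pos,
        Measure.addHaar_ball_of_pos volume 0 hsqpos, finrank_euclideanSpace_fin, ← hν_def,
        hreal, ENNReal.ofReal_mul (show (0:ℝ) ≤ c₀ * t ^ (-(2 * (n:ℝ) * p)) by positivity),
        ENNReal.ofReal_mul (show (0:ℝ) ≤ (t * Real.sqrt t) ^ n by positivity)]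
      ring
    calc ENNReal.ofReal (c₀ * t ^ (2 * (n:ℝ) - 2 * n * p)) * (ν * ν)
        = ∫⁻ _x in Metric.ball (0 : EuclideanSpace ℝ (Fin n)) (t * Real.sqrt t),
            ∫⁻ _v in Metric.ball (0 : EuclideanSpace ℝ (Fin n)) (Real.sqrt t),
              ENNReal.ofReal (c₀ * t ^ (-(2 * (n:ℝ) * p))) := e1.symm
      _ ≤ ∫⁻ x in Metric.ball (0 : EuclideanSpace ℝ (Fin n)) (t * Real.sqrt t),
            ∫⁻ v in Metric.ball (0 : EuclideanSpace ℝ (Fin n)) (Real.sqrt t),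
              ENNReal.ofReal (kfsG n p (t, x, v)) := by
            refine setLIntegral_mono' measurableSet_ball fun x hx => ?_
            exact setLIntegral_mono' measurableSet_ball fun v hv =>
              ENNReal.ofReal_le_ofReal (hpoint x hx v hv)
      _ ≤ ∫⁻ x in Metric.ball (0 : EuclideanSpace ℝ (Fin n)) (t * Real.sqrt t),
            ∫⁻ v in Metric.ball (0 : EuclideanSpace ℝ (Fin n)) δ,
              ENNReal.ofReal (kfsG n p (t, x, v)) :=
            lintegral_mono fun x => lintegral_mono_set hsub2
      _ ≤ _ := lintegral_mono_set hsub1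
  have hdiv : ∫⁻ t in Set.Ioo (0:ℝ) T,
      ENNReal.ofReal (c₀ * t ^ (2 * (n:ℝ) - 2 * n * p)) * (ν * ν) = ⊤ := by
    have hcongr : ∀ t : ℝ, ENNReal.ofReal (c₀ * t ^ (2 * (n:ℝ) - 2 * n * p)) * (ν * ν)
        = (ENNReal.ofReal c₀ * (ν * ν)) * ENNReal.ofReal (t ^ (2 * (n:ℝ) - 2 * n * p)) :=
      fun t => by rw [ENNReal.ofReal_mul hc₀.le]; ring
    rw [lintegral_congr hcongr, lintegral_const_mul' _ _
        (ENNReal.mul_ne_top ENNReal.ofReal_ne_top (ENNReal.mul_ne_top hνtop hνtop)),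
      kfs_rpow_lint_top hT hs, ENNReal.mul_top]
    exact mul_ne_zero (ENNReal.ofReal_pos.mpr hc₀).ne' (mul_ne_zero hν0 hν0)
  rw [eq_top_iff, ← hdiv]
  calc ∫⁻ t in Set.Ioo (0:ℝ) T,
        ENNReal.ofReal (c₀ * t ^ (2 * (n:ℝ) - 2 * n * p)) * (ν * ν)
      ≤ ∫⁻ t in Set.Ioo (0:ℝ) T,
          ∫⁻ x in Metric.ball (0 : EuclideanSpace ℝ (Fin n)) δ,
            ∫⁻ v in Metric.ball (0 : EuclideanSpace ℝ (Fin n)) δ,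
              ENNReal.ofReal (kfsG n p (t, x, v)) :=
        setLIntegral_mono' measurableSet_Ioo step
    _ ≤ _ := lintegral_mono_set (Set.Ioo_subset_Ioo le_rfl (min_le_left _ _))
/-- For the Kolmogorov fundamental solution
`Γ(t,x,v) = (√3)ⁿ/((2π)ⁿ t^(2n)) exp(−|v|²/t + 3⟨v,x⟩/t² − 3|x|²/t³)` and any `p > 0`,
`δ ∈ (0,1)`, `0 < t₀ < 1`, the integral `∫₀^{t₀}∫_{B_δ}∫_{B_δ} Γ^p dv dx dt` is finite
if and only if `p < 1 + 1/(2n)`. -/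
theorem kolmogorov_fundamental_solution_power_integrability
    (n : ℕ) (hn : 1 ≤ n) (p : ℝ) (hp : 0 < p)
    (δ : ℝ) (hδ : δ ∈ Set.Ioo (0 : ℝ) 1) (t₀ : ℝ) (ht₀ : t₀ ∈ Set.Ioo (0 : ℝ) 1)
    (Γ : ℝ → EuclideanSpace ℝ (Fin n) → EuclideanSpace ℝ (Fin n) → ℝ)
    (hΓ : ∀ (t : ℝ), 0 < t → ∀ x v : EuclideanSpace ℝ (Fin n),
      Γ t x v = (Real.sqrt 3) ^ n / ((2 * π) ^ n * t ^ (2 * n)) *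
        Real.exp (-(‖v‖ ^ 2) / t + 3 * (inner ℝ v x : ℝ) / t ^ 2 - 3 * ‖x‖ ^ 2 / t ^ 3)) :
    IntegrableOn
      (fun z : ℝ × EuclideanSpace ℝ (Fin n) × EuclideanSpace ℝ (Fin n) =>
        (Γ z.1 z.2.1 z.2.2) ^ p)
      (Set.Ioo (0 : ℝ) t₀ ×ˢ (Metric.ball 0 δ ×ˢ Metric.ball 0 δ)) volume ↔
    p < 1 + 1 / (2 * n) := by
  have hn' : (0:ℝ) < n := by exact_mod_cast hn
  have h2n : (0:ℝ) < 2 * n := by linarith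
  have hiff : p < 1 + 1 / (2 * (n:ℝ)) ↔ -1 < 2 * (n:ℝ) - 2 * n * p := by
    have e : 2 * (n:ℝ) * (1 + 1 / (2 * (n:ℝ))) = 2 * n + 1 := by field_simp
    constructor
    · intro h
      have h2 := mul_lt_mul_of_pos_left h h2n
      rw [e] at h2
      linarith
    · intro h
      have h2 : 2 * (n:ℝ) * p < 2 * (n:ℝ) * (1 + 1 / (2 * (n:ℝ))) := by rw [e]; linarith
      exact lt_of_mul_lt_mul_left h2 h2n.le
  have hSmeas : MeasurableSet (Set.Ioo (0 : ℝ) t₀ ×ˢ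
      (Metric.ball (0 : EuclideanSpace ℝ (Fin n)) δ ×ˢ Metric.ball (0 : EuclideanSpace ℝ (Fin n)) δ)) :=
    measurableSet_Ioo.prod (measurableSet_ball.prod measurableSet_ball)
  have hae : (fun z : ℝ × EuclideanSpace ℝ (Fin n) × EuclideanSpace ℝ (Fin n) =>
        (Γ z.1 z.2.1 z.2.2) ^ p)
      =ᵐ[volume.restrict (Set.Ioo (0 : ℝ) t₀ ×ˢ
        (Metric.ball (0 : EuclideanSpace ℝ (Fin n)) δ ×ˢ Metric.ball (0 : EuclideanSpace ℝ (Fin n)) δ))]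
      kfsG n p := by
    filter_upwards [ae_restrict_mem hSmeas] with z hz
    rw [hΓ z.1 hz.1.1, kfs_point z.1 hz.1.1]
  have hnn : 0 ≤ᵐ[volume.restrict (Set.Ioo (0 : ℝ) t₀ ×ˢ
      (Metric.ball (0 : EuclideanSpace ℝ (Fin n)) δ ×ˢ Metric.ball (0 : EuclideanSpace ℝ (Fin n)) δ))]
      kfsG n p := by
    filter_upwards [ae_restrict_mem hSmeas] with z hz
    have hz1 : (0:ℝ) < z.1 := hz.1.1
    have := Real.rpow_pos_of_pos hz1 (-(2 * (n:ℝ) * p))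
    unfold kfsG
    positivity
  rw [IntegrableOn, integrable_congr hae, Integrable,
    and_iff_right (kfsG_meas n p).aestronglyMeasurable,
    hasFiniteIntegral_iff_ofReal hnn, hiff,
    kfs_tonelli (fun z => ENNReal.ofReal (kfsG n p z))
      (ENNReal.measurable_ofReal.comp (kfsG_meas n p))]
  constructor
  · intro h
    by_contra hle
    push_neg at hle
    rw [kfs_lower hp hδ ht₀ hle] at h
    exact (lt_irrefl _ h).elim
  · intro h
    exact kfs_upper hp ht₀.1 h
end
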